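/- Let q₁, …, qₙ ≥ 2 be pairwise coprime integers, 2 ≤ K ≤ q₁⋯qₙ, and q_max = max_i qᵢ. If a coordinate i ∈ {1,…,n} has locality r > 0 in the Chinese Remainder code CR(q, K), then q_max^r ≥ K, i.e., r ≥ log(K)/log(q_max). -/

import Mathlib

/-- The weight of a set `I` of coordinates: the product of the moduli indexed by `I`. -/
def wtS {ι : Type} (q : ι → ℕ) (I : Finset ι) : ℕ := ∏ i ∈ I, q i

/-- `S` is a helper set for coordinate `i` in the code `C`: `i ∉ S` and any two codewords
agreeing on all coordinates of `S` also agree at coordinate `i`. -/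
def IsHelperSet {ι : Type} (q : ι → ℕ) (C : Finset (∀ i : ι, ZMod (q i)))
    (i : ι) (S : Finset ι) : Prop :=
  i ∉ S ∧ ∀ a ∈ C, ∀ b ∈ C, (∀ j ∈ S, a j = b j) → a i = b i

/-- Coordinate `i` has locality `r` in `C`: some helper set `S` for `i` has `wt(S) ≤ (q i)^r`. -/
def HasLocalityAt {ι : Type} (q : ι → ℕ) (C : Finset (∀ i : ι, ZMod (q i)))
    (i : ι) (r : ℝ) : Prop :=
  ∃ S : Finset ι, IsHelperSet q C i S ∧ (wtS q S : ℝ) ≤ (q i : ℝ) ^ r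

/-- The Chinese Remainder code: residue vectors of the integers `0 ≤ x < K`. -/
def CRcode {ι : Type} [Fintype ι] [DecidableEq ι] (q : ι → ℕ) (K : ℕ) :
    Finset (∀ i : ι, ZMod (q i)) :=
  (Finset.range K).image (fun x => fun i => (x : ZMod (q i)))

/-- If a coordinate `i` has locality `r > 0` in the Chinese Remainder code `CR(q, K)`,
then `q_max ^ r ≥ K`, i.e. `r ≥ log K / log q_max`. -/
theorem statement6 {n : ℕ} (hn : 1 ≤ n) (q : Fin n → ℕ) (hq : ∀ i, 2 ≤ q i)
    (hcop : ∀ i j : Fin n, i ≠ j → Nat.Coprime (q i) (q j))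
    (K : ℕ) (hK2 : 2 ≤ K) (hKN : K ≤ ∏ i, q i)
    (i : Fin n) (r : ℝ) (hr : 0 < r)
    (hloc : HasLocalityAt q (CRcode q K) i r) :
    (K : ℝ) ≤ ((Finset.univ.sup q : ℕ) : ℝ) ^ r ∧
      Real.log (K : ℝ) / Real.log ((Finset.univ.sup q : ℕ) : ℝ) ≤ r := by
  obtain ⟨S, ⟨hiS, hhelp⟩, hw⟩ := hloc
  have hKw : K ≤ wtS q S := by
    by_contra h
    push_neg at h
    have h0K : 0 < K := by omega
    have ha : (fun j => ((0 : ℕ) : ZMod (q j))) ∈ CRcode q K := by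
      exact Finset.mem_image.mpr ⟨0, Finset.mem_range.mpr h0K, rfl⟩
    have hb : (fun j => ((wtS q S : ℕ) : ZMod (q j))) ∈ CRcode q K := by
      exact Finset.mem_image.mpr ⟨wtS q S, Finset.mem_range.mpr h, rfl⟩
    have hagree : ∀ j ∈ S, ((0 : ℕ) : ZMod (q j)) = ((wtS q S : ℕ) : ZMod (q j)) := by
      intro j hj
      haveI : NeZero (q j) := ⟨by have := hq j; omega⟩
      have : (q j : ℕ) ∣ wtS q S := Finset.dvd_prod_of_mem q hj
      rw [(ZMod.natCast_eq_zero_iff _ _).mpr this]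
      simp
    have heq := hhelp _ ha _ hb hagree
    haveI : NeZero (q i) := ⟨by have := hq i; omega⟩
    simp only [Nat.cast_zero] at heq
    have hdvd : (q i) ∣ wtS q S :=
      (ZMod.natCast_eq_zero_iff _ _).mp heq.symm
    have hcp : Nat.Coprime (q i) (wtS q S) :=
      Nat.Coprime.prod_right (fun j hj => hcop i j (fun hij => hiS (hij ▸ hj)))
    have := Nat.Coprime.eq_one_of_dvd hcp hdvd
    have := hq i
    omega
  have hqmax : q i ≤ Finset.univ.sup q := Finset.le_sup (Finset.mem_univ i)
  have h2max : 2 ≤ Finset.univ.sup q := le_trans (hq i) hqmax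
  have hK : (K : ℝ) ≤ ((Finset.univ.sup q : ℕ) : ℝ) ^ r := by
    calc (K : ℝ) ≤ (wtS q S : ℝ) := by exact_mod_cast hKw
    _ ≤ (q i : ℝ) ^ r := hw
    _ ≤ ((Finset.univ.sup q : ℕ) : ℝ) ^ r :=
        Real.rpow_le_rpow (by positivity) (by exact_mod_cast hqmax) hr.le
  refine ⟨hK, ?_⟩
  have hlogpos : 0 < Real.log ((Finset.univ.sup q : ℕ) : ℝ) := by
    apply Real.log_pos
    exact_mod_cast h2max
  rw [div_le_iff₀ hlogpos]
  calc Real.log (K : ℝ) ≤ Real.log (((Finset.univ.sup q : ℕ) : ℝ) ^ r) :=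
        Real.log_le_log (by exact_mod_cast (lt_of_lt_of_le Nat.zero_lt_two hK2)) hK
  _ = r * Real.log _ := Real.log_rpow (by positivity) r
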